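/- Equivalence with the declarative system: Γ ⊢ S <: T is derivable in the algorithmic subtyping system if and only if it is derivable in the declarative system obtained by adding explicit reflexivity and transitivity rules and replacing SA-Trans-TVar by the axiom Γ ⊢ X <: U whenever X<:U ∈ Γ, restricted to well-scoped judgments. -/

import Mathlib

inductive Ty where
  | var : ℕ → Ty
  | top : Ty
  | arrow : Ty → Ty → Ty
  | all : ℕ → Ty → Ty → Ty

abbrev Env := List (ℕ × Ty)

def freeVars : Ty → Finset ℕ
  | .var x => {x}
  | .top => ∅
  | .arrow a b => freeVars a ∪ freeVars b
  | .all x a b => freeVars a ∪ (freeVars b \ {x})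

def boundVars (Γ : Env) : Finset ℕ := (Γ.map Prod.fst).toFinset

/-- A type is well-scoped in Γ if all its free variables are bound in Γ. -/
def WellScoped (Γ : Env) (t : Ty) : Prop := freeVars t ⊆ boundVars Γ

/-- The original algorithmic subtyping system for F<:. -/
inductive Subty : Env → Ty → Ty → Prop where
  | top {Γ S} : WellScoped Γ S → Subty Γ S .top
  | refl {Γ X} : X ∈ boundVars Γ → Subty Γ (.var X) (.var X)
  | trans_tvar {Γ X U T} : (X, U) ∈ Γ → Subty Γ U T → Subty Γ (.var X) T
  | arrow {Γ S₁ S₂ T₁ T₂} : Subty Γ T₁ S₁ → Subty Γ S₂ T₂ →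
      Subty Γ (.arrow S₁ S₂) (.arrow T₁ T₂)
  | all {Γ X S₁ S₂ T₁ T₂} : Subty Γ T₁ S₁ → Subty ((X, T₁) :: Γ) S₂ T₂ →
      Subty Γ (.all X S₁ S₂) (.all X T₁ T₂)

/-- The declarative subtyping system, with explicit reflexivity and
    transitivity rules and the variable axiom in place of SA-Trans-TVar. -/
inductive DSub : Env → Ty → Ty → Prop where
  | top {Γ S} : WellScoped Γ S → DSub Γ S .top
  | refl {Γ T} : WellScoped Γ T → DSub Γ T T
  | trans {Γ S Q T} : DSub Γ S Q → DSub Γ Q T → DSub Γ S T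
  | hyp {Γ X U} : (X, U) ∈ Γ → WellScoped Γ U → DSub Γ (.var X) U
  | arrow {Γ S₁ S₂ T₁ T₂} : DSub Γ T₁ S₁ → DSub Γ S₂ T₂ →
      DSub Γ (.arrow S₁ S₂) (.arrow T₁ T₂)
  | all {Γ X S₁ S₂ T₁ T₂} : DSub Γ T₁ S₁ → DSub ((X, T₁) :: Γ) S₂ T₂ →
      DSub Γ (.all X S₁ S₂) (.all X T₁ T₂)

lemma mem_boundVars {Γ : Env} {x : ℕ} : x ∈ boundVars Γ ↔ ∃ U, (x, U) ∈ Γ := by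
  constructor
  · intro h
    simp only [boundVars, List.mem_toFinset, List.mem_map] at h
    obtain ⟨⟨a,b⟩, hm, rfl⟩ := h
    exact ⟨b, hm⟩
  · rintro ⟨U, h⟩
    simp only [boundVars, List.mem_toFinset, List.mem_map]
    exact ⟨(x,U), h, rfl⟩

lemma boundVars_cons {x : ℕ} {U : Ty} {Γ : Env} :
    boundVars ((x,U)::Γ) = insert x (boundVars Γ) := by
  simp [boundVars]

lemma boundVars_mono {Γ Γ' : Env} (h : ∀ p, p ∈ Γ → p ∈ Γ') :
    boundVars Γ ⊆ boundVars Γ' := by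
  intro x hx
  rw [mem_boundVars] at hx ⊢
  obtain ⟨U, hU⟩ := hx
  exact ⟨U, h _ hU⟩

lemma ws_mono {Γ Γ' : Env} {t : Ty} (h : ∀ p, p ∈ Γ → p ∈ Γ')
    (hws : WellScoped Γ t) : WellScoped Γ' t :=
  hws.trans (boundVars_mono h)

lemma Subty.mono {Γ M N} (h : Subty Γ M N) :
    ∀ {Γ' : Env}, (∀ p, p ∈ Γ → p ∈ Γ') → Subty Γ' M N := by
  induction h with
  | top hws => exact fun hsub => .top (ws_mono hsub hws)
  | refl hx => exact fun hsub => .refl (boundVars_mono hsub hx)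
  | trans_tvar hmem _ ih => exact fun hsub => .trans_tvar (hsub _ hmem) (ih hsub)
  | arrow _ _ ih1 ih2 => exact fun hsub => .arrow (ih1 hsub) (ih2 hsub)
  | all _ _ ih1 ih2 =>
      intro Γ' hsub
      refine .all (ih1 hsub) (ih2 ?_)
      intro p hp
      rcases List.mem_cons.1 hp with h | h
      · exact List.mem_cons.2 (Or.inl h)
      · exact List.mem_cons.2 (Or.inr (hsub _ h))

lemma Subty.regular {Γ M N} (h : Subty Γ M N) :
    WellScoped Γ M ∧ WellScoped Γ N := by
  induction h with
  | top hws => exact ⟨hws, by simp [WellScoped, freeVars]⟩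
  | @refl Γ' X hx =>
      have : WellScoped Γ' (.var X) := by
        simp [WellScoped, freeVars]; exact hx
      exact ⟨this, this⟩
  | trans_tvar hmem _ ih =>
      refine ⟨?_, ih.2⟩
      simp [WellScoped, freeVars]
      exact mem_boundVars.2 ⟨_, hmem⟩
  | arrow _ _ ih1 ih2 =>
      simp only [WellScoped, freeVars, Finset.union_subset_iff] at *
      exact ⟨⟨ih1.2, ih2.1⟩, ⟨ih1.1, ih2.2⟩⟩
  | all _ _ ih1 ih2 =>
      obtain ⟨hT1, hS1⟩ := ih1
      obtain ⟨hS2, hT2⟩ := ih2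
      simp only [WellScoped, boundVars_cons] at hS2 hT2
      constructor <;>
      · simp only [WellScoped, freeVars, Finset.union_subset_iff]
        refine ⟨by assumption, ?_⟩
        intro x hx
        simp only [Finset.mem_sdiff, Finset.mem_singleton] at hx
        first
          | (have := hS2 hx.1) | (have := hT2 hx.1)
        simp only [Finset.mem_insert] at this
        tauto

lemma Subty.refl_all : ∀ (T : Ty) (Γ : Env), WellScoped Γ T → Subty Γ T T := by
  intro T
  induction T with
  | var x => intro Γ h; exact .refl (by simpa [WellScoped, freeVars] using h)
  | top => intro Γ h; exact .top h
  | arrow a b iha ihb =>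
      intro Γ h
      simp [WellScoped, freeVars, Finset.union_subset_iff] at h
      exact .arrow (iha Γ h.1) (ihb Γ h.2)
  | all x a b iha ihb =>
      intro Γ h
      simp only [WellScoped, freeVars, Finset.union_subset_iff] at h
      refine .all (iha Γ h.1) (ihb ((x,a)::Γ) ?_)
      intro y hy
      rw [boundVars_cons]
      by_cases hxy : y = x
      · simp [hxy]
      · have : y ∈ freeVars b \ {x} := by simp [hy, hxy]
        exact Finset.mem_insert_of_mem (h.2 this)

lemma narrow (Q : Ty)
    (ht : ∀ Γ S T, Subty Γ S Q → Subty Γ Q T → Subty Γ S T) :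
    ∀ E M N, Subty E M N → ∀ (Δ Γ : Env) (X : ℕ) (P : Ty),
      E = Δ ++ (X,Q)::Γ → Subty Γ P Q → Subty (Δ ++ (X,P)::Γ) M N := by
  intro E M N h
  induction h with
  | top hws =>
      rintro Δ Γ X P rfl hP
      refine .top ?_
      have : boundVars (Δ ++ (X,Q)::Γ) = boundVars (Δ ++ (X,P)::Γ) := by
        simp [boundVars]
      rwa [WellScoped, ← this]
  | refl hx =>
      rintro Δ Γ X P rfl hP
      refine .refl ?_
      have : boundVars (Δ ++ (X,Q)::Γ) = boundVars (Δ ++ (X,P)::Γ) := by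
        simp [boundVars]
      rwa [← this]
  | trans_tvar hmem _ ih =>
      rintro Δ Γ X P rfl hP
      have hUT := ih Δ Γ X P rfl hP
      rcases List.mem_append.1 hmem with h | h
      · exact .trans_tvar (List.mem_append.2 (Or.inl h)) hUT
      · rcases List.mem_cons.1 h with h | h
        · injection h with h1 h2
          subst h1; subst h2
          exact .trans_tvar (List.mem_append.2 (Or.inr (List.mem_cons.2 (Or.inl rfl))))
            (ht _ _ _ (hP.mono fun p hp =>
              List.mem_append.2 (Or.inr (List.mem_cons.2 (Or.inr hp)))) hUT)
        · exact .trans_tvar (List.mem_append.2 (Or.inr (List.mem_cons.2 (Or.inr h)))) hUT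
  | arrow _ _ ih1 ih2 =>
      rintro Δ Γ X P rfl hP
      exact .arrow (ih1 Δ Γ X P rfl hP) (ih2 Δ Γ X P rfl hP)
  | all _ _ ih1 ih2 =>
      rintro Δ Γ X P rfl hP
      exact .all (ih1 Δ Γ X P rfl hP) (ih2 (_ :: Δ) Γ X P rfl hP)

lemma Ty.one_le_sizeOf (T : Ty) : 1 ≤ sizeOf T := by
  cases T <;> simp +arith +decide

lemma trans_size : ∀ n : ℕ, ∀ Γ S Q, Subty Γ S Q → sizeOf Q ≤ n →
    ∀ T, Subty Γ Q T → Subty Γ S T := by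
  intro n
  induction n with
  | zero =>
      intro Γ S Q _ hQ
      have := Ty.one_le_sizeOf Q
      omega
  | succ n ih =>
      intro Γ S Q h1
      induction h1 with
      | top hws =>
          intro _ T h2
          cases h2 with
          | top => exact .top hws
      | refl hx => exact fun _ T h2 => h2
      | trans_tvar hmem _ ihd =>
          intro hQ T h2
          exact .trans_tvar hmem (ihd hQ T h2)
      | arrow hA hB ihA ihB =>
          intro hQ T h2
          rename_i S₁ S₂ Q₁ Q₂
          have h1 : sizeOf Q₁ ≤ n := by simp at hQ; omega
          have h2' : sizeOf Q₂ ≤ n := by simp at hQ; omega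
          cases h2 with
          | top =>
              exact .top (Subty.regular (.arrow hA hB)).1
          | arrow hA' hB' =>
              exact .arrow (ih _ _ _ hA' h1 _ hA) (ih _ _ _ hB h2' _ hB')
      | all hA hB ihA ihB =>
          intro hQ T h2
          rename_i X S₁ S₂ Q₁ Q₂
          have hq1 : sizeOf Q₁ ≤ n := by simp at hQ; omega
          have hq2 : sizeOf Q₂ ≤ n := by simp at hQ; omega
          cases h2 with
          | top => exact .top (Subty.regular (.all hA hB)).1
          | all hA' hB' =>
              rename_i T₁ T₂
              have htrans1 : Subty _ T₁ S₁ := ih _ _ _ hA' hq1 _ hA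
              have hnarrow : Subty ([] ++ (X,T₁)::_) S₂ Q₂ :=
                narrow Q₁ (fun Γ S T hs ht => ih Γ S Q₁ hs hq1 T ht)
                  _ _ _ hB [] _ X T₁ rfl hA'
              have htrans2 : Subty ((X,T₁)::_) S₂ T₂ :=
                ih _ _ _ hnarrow hq2 _ hB'
              exact .all htrans1 htrans2

lemma Subty.trans' {Γ S Q T} (h1 : Subty Γ S Q) (h2 : Subty Γ Q T) :
    Subty Γ S T :=
  trans_size (sizeOf Q) Γ S Q h1 le_rfl T h2

lemma Subty.of_dsub {Γ S T} (h : DSub Γ S T) : Subty Γ S T := by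
  induction h with
  | top hws => exact .top hws
  | refl hws => exact Subty.refl_all _ _ hws
  | trans _ _ ih1 ih2 => exact ih1.trans' ih2
  | hyp hmem hws => exact .trans_tvar hmem (Subty.refl_all _ _ hws)
  | arrow _ _ ih1 ih2 => exact .arrow ih1 ih2
  | all _ _ ih1 ih2 => exact .all ih1 ih2

lemma DSub.of_subty {Γ S T} (h : Subty Γ S T) : DSub Γ S T := by
  induction h with
  | top hws => exact .top hws
  | refl hx => exact .refl (by simpa [WellScoped, freeVars] using hx)
  | trans_tvar hmem hUT ih =>
      exact .trans (.hyp hmem hUT.regular.1) ih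
  | arrow _ _ ih1 ih2 => exact .arrow ih1 ih2
  | all _ _ ih1 ih2 => exact .all ih1 ih2


theorem algorithmic_iff_declarative (Γ : Env) (S T : Ty)
    (hS : WellScoped Γ S) (hT : WellScoped Γ T) :
    Subty Γ S T ↔ DSub Γ S T := by
  exact ⟨DSub.of_subty, Subty.of_dsub⟩
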